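/- For all integers n ≥ 1 and k ≥ 0, the number of Catalan words of length n with exactly k short valleys (1-valleys) equals the number of Dyck paths of semilength n having exactly k occurrences of the factor DDUU. -/

import Mathlib

/-- The set of Catalan words of length `n`: words `w` over ℕ with `w 1 = 0` and
`w (i+1) ≤ w i + 1` for all `i`. -/
def CatalanWord (n : ℕ) : Set (List ℕ) :=
  {w | w.length = n ∧ w.getD 0 0 = 0 ∧
    ∀ i, i + 1 < n → w.getD (i + 1) 0 ≤ w.getD i 0 + 1}

/-- Number of `l`-valleys of `w`: occurrences of a factor `a b^l (b+1)` with `a > b`. -/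
def lValleys (l : ℕ) (w : List ℕ) : ℕ :=
  ((Finset.range w.length).filter (fun i =>
    i + l + 1 < w.length ∧
    w.getD (i + 1) 0 < w.getD i 0 ∧
    (∀ j, j < l → w.getD (i + 1 + j) 0 = w.getD (i + 1) 0) ∧
    w.getD (i + l + 1) 0 = w.getD (i + 1) 0 + 1)).card

/-- Dyck paths of semilength `n`, encoded as lists of booleans
(`true` = up step `U`, `false` = down step `D`): `2n` steps, `n` of them up,
and every prefix has at least as many up steps as down steps. -/
def DyckPath (n : ℕ) : Set (List Bool) :=
  {p | p.length = 2 * n ∧ p.count true = n ∧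
    ∀ i, i ≤ 2 * n → (p.take i).count false ≤ (p.take i).count true}

/-- Number of occurrences of the factor `DDUU` in a path. -/
def dduuCount (p : List Bool) : ℕ :=
  ((Finset.range p.length).filter (fun i =>
    i + 3 < p.length ∧ p.getD i false = false ∧ p.getD (i + 1) false = false ∧
    p.getD (i + 2) false = true ∧ p.getD (i + 3) false = true)).card


/-! ### Auxiliary development -/

def tP : List ℕ → List Bool
  | [] => []
  | a :: r => true :: (List.replicate (a + 1 - r.getD 0 0) false ++ tP r)

def fromP : ℕ → List Bool → List ℕ
  | _, [] => []
  | h, true :: p => h :: fromP (h+1) p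
  | h, false :: p => fromP (h-1) p

def StepCond (w : List ℕ) : Prop :=
  ∀ i, i + 1 < w.length → w.getD (i+1) 0 ≤ w.getD i 0 + 1

lemma stepCond_tail {a : ℕ} {r : List ℕ} (h : StepCond (a :: r)) : StepCond r := by
  intro i hi
  have := h (i+1) (by simpa using Nat.succ_lt_succ hi)
  simpa using this

lemma stepCond_head {a : ℕ} {r : List ℕ} (h : StepCond (a :: r)) : r.getD 0 0 ≤ a + 1 := by
  rcases r with _ | ⟨b, r'⟩
  · simp
  · simpa using h 0 (by simp)

lemma count_true_add_count_false (p : List Bool) :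
    p.count true + p.count false = p.length := by
  induction p with
  | nil => simp
  | cons x q ih => cases x <;> simp [List.count_cons] <;> omega

lemma filter_range_succ (p : ℕ → Prop) [DecidablePred p] (n : ℕ) :
    ((Finset.range (n+1)).filter p).card =
      ((Finset.range n).filter (fun i => p (i+1))).card + (if p 0 then 1 else 0) := by
  simp only [Finset.card_filter]
  exact Finset.sum_range_succ' _ n

lemma getD_true_lt {p : List Bool} {i : ℕ} (h : p.getD i false = true) : i < p.length := by
  by_contra hc
  rw [List.getD_eq_default _ _ (by omega)] at h
  exact absurd h (by simp)

lemma dduu_nil : dduuCount [] = 0 := by simp [dduuCount]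

lemma dduu_cons (x : Bool) (p : List Bool) :
    dduuCount (x :: p) = dduuCount p +
      (if x = false ∧ p.getD 0 false = false ∧ p.getD 1 false = true ∧ p.getD 2 false = true
        then 1 else 0) := by
  unfold dduuCount
  rw [List.length_cons, filter_range_succ]
  congr 1
  · refine congrArg Finset.card (Finset.filter_congr ?_)
    intro i _
    simp only [List.getD_cons_succ, show ∀ m:ℕ, i+1+m = i+m+1 from fun m => by omega,
      List.getD_cons_succ]
    constructor <;> rintro ⟨h1, h⟩ <;> exact ⟨by omega, h⟩
  · apply if_congr _ rfl rfl
    simp only [List.getD_cons_succ, List.getD_cons_zero, show (0:ℕ)+1 = 1 from rfl,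
      show (0:ℕ)+2 = 2 from rfl, show (0:ℕ)+3 = 3 from rfl]
    constructor
    · rintro ⟨-, h⟩; exact h
    · rintro ⟨h1, h2, h3, h4⟩
      have := getD_true_lt h4
      exact ⟨by omega, h1, h2, h3, h4⟩

lemma dduu_cons_true (p : List Bool) : dduuCount (true :: p) = dduuCount p := by
  rw [dduu_cons, if_neg (by rintro ⟨h, -⟩; exact absurd h (by simp)), add_zero]

lemma dduu_cons_false (p : List Bool) :
    dduuCount (false :: p) = dduuCount p +
      (if p.getD 0 false = false ∧ p.getD 1 false = true ∧ p.getD 2 false = true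
        then 1 else 0) := by
  rw [dduu_cons]
  congr 1
  apply if_congr _ rfl rfl
  constructor
  · rintro ⟨-, h⟩; exact h
  · intro h; exact ⟨rfl, h⟩

lemma getD_replicate_false_append (m i : ℕ) (Q : List Bool) :
    (List.replicate m false ++ Q).getD i false =
      if i < m then false else Q.getD (i - m) false := by
  rcases Nat.lt_or_ge i m with h | h
  · rw [if_pos h, List.getD_append _ _ _ _ (by simpa using h)]
    induction m generalizing i with
    | zero => omega
    | succ m ih =>
      rw [List.replicate_succ]
      rcases i with _ | i
      · rfl
      · simpa using ih i (by omega)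
  · rw [if_neg (by omega), List.getD_append_right _ _ _ _ (by simpa using h)]
    simp

lemma dduu_replicate (d : ℕ) (Q : List Bool) (hQ : Q = [] ∨ Q.getD 0 false = true) :
    dduuCount (List.replicate d false ++ Q) = dduuCount Q +
      (if 2 ≤ d ∧ Q.getD 0 false = true ∧ Q.getD 1 false = true then 1 else 0) := by
  have hQ0 : Q.getD 0 false = true ∨ (Q.getD 0 false = false ∧ Q.getD 1 false = false) := by
    rcases hQ with h | h
    · right; subst h; exact ⟨rfl, rfl⟩
    · left; exact h
  induction d with
  | zero => simp
  | succ d ih =>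
    rw [List.replicate_succ, List.cons_append, dduu_cons_false, ih]
    rcases hQ0 with h | ⟨h0, h1⟩
    · rcases d with _ | _ | d <;>
        simp only [getD_replicate_false_append] <;> norm_num [h] <;>
          first
            | omega
            | simp_all [List.getD_eq_getElem?_getD]
            | (split_ifs with hs
               · exact absurd hs.1 (by omega)
               · omega)
    · rcases d with _ | _ | d <;>
        simp only [getD_replicate_false_append] <;> norm_num [h0, h1] <;>
          first
            | omega
            | simp_all [List.getD_eq_getElem?_getD]
            | (split_ifs with hs
               · exact absurd hs.1 (by omega)
               · omega)

lemma lValleys_nil : lValleys 1 [] = 0 := by simp [lValleys]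

lemma lValleys_cons (a : ℕ) (r : List ℕ) :
    lValleys 1 (a :: r) = lValleys 1 r +
      (if 1 < r.length ∧ r.getD 0 0 < a ∧ r.getD 1 0 = r.getD 0 0 + 1 then 1 else 0) := by
  unfold lValleys
  rw [List.length_cons, filter_range_succ]
  congr 1
  · refine congrArg Finset.card (Finset.filter_congr ?_)
    intro i _
    simp only [Nat.lt_one_iff, forall_eq, Nat.add_zero, List.getD_cons_succ,
      show ∀ m:ℕ, i+1+m = i+m+1 from fun m => by omega, List.getD_cons_succ]
    constructor <;> rintro ⟨h1, h2, h3, h4⟩ <;> exact ⟨by omega, h2, h3, h4⟩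
  · apply if_congr _ rfl rfl
    simp only [Nat.lt_one_iff, forall_eq, Nat.add_zero, List.getD_cons_succ,
      List.getD_cons_zero, show (0:ℕ)+1+1 = 2 from rfl, show (0:ℕ)+1 = 1 from rfl]
    constructor
    · rintro ⟨h0, h1, -, h2⟩
      exact ⟨by omega, h1, h2⟩
    · rintro ⟨h0, h1, h2⟩
      exact ⟨by omega, h1, trivial, h2⟩

lemma tP_count_true (w : List ℕ) : (tP w).count true = w.length := by
  induction w with
  | nil => simp [tP]
  | cons a r ih => simp [tP, List.count_cons, List.count_append, List.count_replicate, ih]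

lemma tP_count_false (w : List ℕ) (hw : StepCond w) :
    (tP w).count false = w.length + w.getD 0 0 := by
  induction w with
  | nil => simp [tP]
  | cons a r ih =>
    have hb := stepCond_head hw
    have hr := ih (stepCond_tail hw)
    simp only [tP, List.count_cons, List.count_append, List.count_replicate,
      List.length_cons, List.getD_cons_zero]
    simp at hr hb ⊢
    omega

lemma tP_length (w : List ℕ) (hw : StepCond w) (h0 : w.getD 0 0 = 0) :
    (tP w).length = 2 * w.length := by
  have h1 := tP_count_true w
  have h2 := tP_count_false w hw
  have h3 := count_true_add_count_false (tP w)
  omega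

lemma tP_prefix (w : List ℕ) (hw : StepCond w) (h : ℕ) (hh : w.getD 0 0 ≤ h) :
    ∀ i, ((tP w).take i).count false ≤ ((tP w).take i).count true + h := by
  induction w generalizing h with
  | nil => intro i; simp [tP]
  | cons a r ih =>
    have hb := stepCond_head hw
    have hrec := ih (stepCond_tail hw) (r.getD 0 0) le_rfl
    simp only [List.getD_cons_zero] at hh
    set b := r.getD 0 0 with hbdef
    intro i
    rcases i with _ | j
    · simp
    have := hrec (j - (a + 1 - b))
    simp only [tP, List.take_succ_cons, List.take_append, List.take_replicate,
      List.length_replicate, List.count_cons, List.count_append, List.count_replicate]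
    simp only [hbdef] at *
    simp at this hh hb ⊢
    omega

lemma stat (w : List ℕ) (hw : StepCond w) : dduuCount (tP w) = lValleys 1 w := by
  induction w with
  | nil => rw [show tP [] = [] from rfl, dduu_nil, lValleys_nil]
  | cons a r ih =>
    rw [lValleys_cons, ← ih (stepCond_tail hw)]
    have hQ : tP r = [] ∨ (tP r).getD 0 false = true := by
      rcases r with _ | ⟨b, r'⟩
      · exact Or.inl rfl
      · exact Or.inr rfl
    rw [show tP (a :: r) = true :: (List.replicate (a + 1 - r.getD 0 0) false ++ tP r)
        from rfl, dduu_cons_true, dduu_replicate _ _ hQ]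
    congr 1
    apply if_congr _ rfl rfl
    rcases r with _ | ⟨b, r'⟩
    · simp [tP]
    rcases r' with _ | ⟨c, r''⟩
    · constructor
      · rintro ⟨-, -, h2⟩
        have hg : (tP [b]).getD 1 false = false := by
          show (true :: (List.replicate (b + 1 - ([] : List ℕ).getD 0 0) false ++
            tP ([] : List ℕ))).getD 1 false = false
          rw [List.getD_cons_succ, getD_replicate_false_append, if_pos (by simp)]
        rw [hg] at h2
        exact absurd h2 (by simp)
      · rintro ⟨h0, -⟩
        exact absurd h0 (by simp)
    · have hc : c ≤ b + 1 := by
        have := stepCond_head (stepCond_tail hw)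
        simpa using this
      have hg1 : (tP (b :: c :: r'')).getD 1 false
          = if 0 < b + 1 - c then false else true := by
        show (true :: (List.replicate (b + 1 - (c :: r'').getD 0 0) false ++
          tP (c :: r''))).getD 1 false = _
        rw [List.getD_cons_succ, getD_replicate_false_append]
        simp only [List.getD_cons_zero, Nat.zero_sub]
        split_ifs <;> rfl
      simp only [List.getD_cons_zero, List.getD_cons_succ, List.length_cons]
      constructor
      · rintro ⟨h1, -, h2⟩
        rw [hg1] at h2
        refine ⟨by omega, by omega, ?_⟩
        by_cases hp : 0 < b + 1 - c
        · rw [if_pos hp] at h2; exact absurd h2 (by simp)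
        · omega
      · rintro ⟨-, h1, h2⟩
        refine ⟨by omega, rfl, ?_⟩
        rw [hg1, if_neg (by omega)]

lemma fromP_length (p : List Bool) : ∀ h, (fromP h p).length = p.count true := by
  induction p with
  | nil => intro h; simp [fromP]
  | cons x q ih =>
    intro h
    cases x
    · show (fromP (h-1) q).length = _
      rw [ih]
      simp [List.count_cons]
    · show (h :: fromP (h+1) q).length = _
      rw [List.length_cons, ih]
      simp [List.count_cons]

lemma fromP_head_le (p : List Bool) : ∀ h, (fromP h p).getD 0 0 ≤ h := by
  induction p with
  | nil => intro h; simp [fromP]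
  | cons x q ih =>
    intro h
    cases x
    · exact le_trans (ih (h-1)) (by omega)
    · simp [fromP]

lemma fromP_step (p : List Bool) : ∀ h, StepCond (fromP h p) := by
  induction p with
  | nil => intro h i hi; simp [fromP] at hi
  | cons x q ih =>
    intro h
    cases x
    · exact ih (h-1)
    · intro i hi
      show (h :: fromP (h+1) q).getD (i+1) 0 ≤ (h :: fromP (h+1) q).getD i 0 + 1
      rcases i with _ | j
      · rw [List.getD_cons_succ, List.getD_cons_zero]
        exact le_trans (fromP_head_le q (h+1)) le_rfl
      · rw [List.getD_cons_succ, List.getD_cons_succ]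
        apply ih (h+1)
        have : (fromP h (true :: q)).length = (fromP (h+1) q).length + 1 := rfl
        rw [show fromP h (true :: q) = h :: fromP (h+1) q from rfl] at hi
        simp only [List.length_cons] at hi
        omega

lemma fromP_replicate (d : ℕ) (p : List Bool) :
    ∀ h, fromP h (List.replicate d false ++ p) = fromP (h - d) p := by
  induction d with
  | zero => intro h; simp
  | succ d ih =>
    intro h
    rw [List.replicate_succ, List.cons_append]
    show fromP (h - 1) (List.replicate d false ++ p) = _
    rw [ih (h-1), show h - 1 - d = h - (d+1) from by omega]

lemma fromP_getD0 (p : List Bool) (h : ℕ) (hp : p.getD 0 false = true) :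
    (fromP h p).getD 0 0 = h := by
  rcases p with _ | ⟨x, q⟩
  · simp at hp
  · cases x
    · simp at hp
    · rfl

lemma head_eq_getD (l : List Bool) (w : l ≠ []) : l.head w = l.getD 0 false := by
  rcases l with _ | ⟨x, q⟩
  · exact absurd rfl w
  · rfl

lemma fromP_tP (w : List ℕ) (hw : StepCond w) : fromP (w.getD 0 0) (tP w) = w := by
  induction w with
  | nil => rfl
  | cons a r ih =>
    have hb := stepCond_head hw
    show fromP ((a :: r).getD 0 0) (tP (a :: r)) = a :: r
    rw [List.getD_cons_zero]
    show a :: fromP (a+1) (List.replicate (a + 1 - r.getD 0 0) false ++ tP r) = a :: r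
    rw [fromP_replicate, show a + 1 - (a + 1 - r.getD 0 0) = r.getD 0 0 from by omega,
      ih (stepCond_tail hw)]

lemma tP_fromP (N : ℕ) : ∀ p : List Bool, p.length ≤ N → ∀ h : ℕ,
    (p = [] ∨ p.getD 0 false = true) →
    (∀ i, (p.take i).count false ≤ (p.take i).count true + h) →
    (p.count false = p.count true + h) →
    tP (fromP h p) = p := by
  induction N with
  | zero =>
    intro p hlen h _ _ _
    rcases p with _ | ⟨x, q⟩
    · rfl
    · simp at hlen
  | succ N ih =>
    intro p hlen h hd hpre htot
    rcases hd with rfl | hd0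
    · rfl
    rcases p with _ | ⟨x, q⟩
    · rfl
    have hx : x = true := by simpa using hd0
    subst hx
    have hq : q.takeWhile (fun b => !b) =
        List.replicate (q.takeWhile (fun b => !b)).length false := by
      apply List.eq_replicate_of_mem
      intro b hb
      simpa using List.mem_takeWhile_imp hb
    set d := (q.takeWhile (fun b => !b)).length with hddef
    set q' := q.dropWhile (fun b => !b) with hq'def
    have hsplit : q = List.replicate d false ++ q' := by
      conv_lhs => rw [← List.takeWhile_append_dropWhile (p := fun b => !b) (l := q)]
      rw [hq]
    have hd' : q' = [] ∨ q'.getD 0 false = true := by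
      rcases hq'' : q' with _ | ⟨y, q''⟩
      · exact Or.inl rfl
      · right
        have hne : q' ≠ [] := by rw [hq'']; simp
        have hy := List.head_dropWhile_not (fun b => !b) (l := q) hne
        rw [head_eq_getD _ hne, hq''] at hy
        simpa using hy
    have hcf : q.count false = d + q'.count false := by
      conv_lhs => rw [hsplit]
      simp [List.count_append, List.count_replicate]
    have hct : q.count true = q'.count true := by
      conv_lhs => rw [hsplit]
      simp [List.count_append, List.count_replicate]
    have hdle : d ≤ h + 1 := by
      have h1 := hpre (d + 1)
      have htake : (true :: q).take (d + 1) = true :: List.replicate d false := by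
        rw [List.take_succ_cons]
        conv_lhs => rw [hsplit]
        rw [List.take_append]
        simp [List.take_replicate]
      rw [htake] at h1
      simp [List.count_cons, List.count_replicate] at h1
      omega
    have htot2 : q'.count false = q'.count true + (h + 1 - d) := by
      simp only [List.count_cons] at htot
      simp at htot
      omega
    have hpre' : ∀ i, (q'.take i).count false ≤ (q'.take i).count true + (h + 1 - d) := by
      intro i
      have h1 := hpre (1 + d + i)
      have htake : (true :: q).take (1 + d + i) =
          true :: (List.replicate d false ++ q'.take i) := by
        rw [show 1 + d + i = (d + i) + 1 from by omega, List.take_succ_cons]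
        conv_lhs => rw [hsplit]
        rw [List.take_append]
        simp [List.take_replicate, show min (d+i) d = d from by omega,
          show d + i - d = i from by omega]
      rw [htake] at h1
      simp [List.count_cons, List.count_append, List.count_replicate] at h1
      omega
    have hlen' : q'.length ≤ N := by
      have h2 := congrArg List.length hsplit
      simp only [List.length_append, List.length_replicate] at h2
      simp only [List.length_cons] at hlen
      omega
    have hrec := ih q' hlen' (h + 1 - d) hd' hpre' htot2
    have hX : (fromP (h + 1 - d) q').getD 0 0 = h + 1 - d := by
      rcases hd' with hq0 | hq0
      · rw [hq0]
        have hz : h + 1 - d = 0 := by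
          rw [hq0] at htot2
          simp at htot2
          omega
        simp [fromP, hz]
      · exact fromP_getD0 _ _ hq0
    show tP (h :: fromP (h + 1) q) = true :: q
    conv_lhs => rw [hsplit]
    rw [fromP_replicate]
    show true :: (List.replicate (h + 1 - (fromP (h + 1 - d) q').getD 0 0) false ++
      tP (fromP (h + 1 - d) q')) = true :: q
    rw [hX, hrec, show h + 1 - (h + 1 - d) = d from by omega, ← hsplit]

lemma cat_stepCond {n : ℕ} {w : List ℕ} (hw : w ∈ CatalanWord n) : StepCond w := by
  obtain ⟨hlen, h0, hstep⟩ := hw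
  intro i hi
  exact hstep i (by omega)

lemma cat_facts {n : ℕ} {w : List ℕ} (hw : w ∈ CatalanWord n) :
    tP w ∈ DyckPath n ∧ fromP 0 (tP w) = w := by
  have hsc := cat_stepCond hw
  obtain ⟨hlen, h0, hstep⟩ := hw
  refine ⟨⟨by rw [tP_length _ hsc h0, hlen], by rw [tP_count_true, hlen], ?_⟩, ?_⟩
  · intro i _
    simpa using tP_prefix w hsc 0 (by omega) i
  · have := fromP_tP w hsc
    rwa [h0] at this

lemma dyck_facts {n : ℕ} (hn : 1 ≤ n) {p : List Bool} (hp : p ∈ DyckPath n) :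
    tP (fromP 0 p) = p ∧ fromP 0 p ∈ CatalanWord n := by
  obtain ⟨hlen, hct, hpre⟩ := hp
  have hcf : p.count false = n := by
    have := count_true_add_count_false p
    omega
  have hp0 : p.getD 0 false = true := by
    rcases p with _ | ⟨x, q⟩
    · simp at hlen; omega
    · cases x
      · have h1 := hpre 1 (by omega)
        simp [List.take_succ_cons, List.count_cons] at h1
      · rfl
  have hpre' : ∀ i, (p.take i).count false ≤ (p.take i).count true := by
    intro i
    rcases le_or_gt i (2 * n) with hi | hi
    · exact hpre i hi
    · rw [List.take_of_length_le (by omega)]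
      omega
  have htot : p.count false = p.count true + 0 := by omega
  have hTP : tP (fromP 0 p) = p :=
    tP_fromP p.length p le_rfl 0 (Or.inr hp0) hpre' htot
  refine ⟨hTP, ⟨?_, ?_, ?_⟩⟩
  · rw [fromP_length, hct]
  · rw [fromP_getD0 p 0 hp0]
  · intro i hi
    apply fromP_step p 0
    rw [fromP_length, hct]
    omega

/-- The number of Catalan words of length `n` with exactly `k` short valleys
(`1`-valleys) equals the number of Dyck paths of semilength `n` with exactly `k`
occurrences of the factor `DDUU`. -/
theorem shortValleys_eq_dduu (n k : ℕ) (hn : 1 ≤ n) :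
    Nat.card {w : List ℕ | w ∈ CatalanWord n ∧ lValleys 1 w = k} =
      Nat.card {p : List Bool | p ∈ DyckPath n ∧ dduuCount p = k} := by
  apply Nat.card_congr
  refine
    { toFun := fun x => ⟨tP x.1, ?_, ?_⟩
      invFun := fun y => ⟨fromP 0 y.1, ?_, ?_⟩
      left_inv := ?_
      right_inv := ?_ }
  · exact (cat_facts x.2.1).1
  · rw [stat x.1 (cat_stepCond x.2.1)]
    exact x.2.2
  · exact (dyck_facts hn y.2.1).2
  · rw [← stat _ (fromP_step y.1 0), (dyck_facts hn y.2.1).1]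
    exact y.2.2
  · intro x
    exact Subtype.ext (cat_facts x.2.1).2
  · intro y
    exact Subtype.ext (dyck_facts hn y.2.1).1
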